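/- Let φ be the strong dual of ℝ^ω, i.e. the space of continuous linear functionals on ℕ → ℝ equipped with the topology of uniform convergence on (von Neumann) bounded subsets of ℝ^ω. Then for every continuous additive group homomorphism T : φ → 𝕋^ω, the image T(φ) is σ-compact, i.e. a countable union of compact subsets of 𝕋^ω. -/
import Mathlib

open Set

noncomputable def iotaMap (n : ℕ) : (Fin n → ℝ) →ₗ[ℝ] ((ℕ → ℝ) →L[ℝ] ℝ) where
  toFun a := ∑ i : Fin n, a i • ContinuousLinearMap.proj (R := ℝ) (φ := fun _ : ℕ => ℝ) (i : ℕ)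
  map_add' a b := by simp [add_smul, Finset.sum_add_distrib]
  map_smul' c a := by simp [Finset.smul_sum, smul_smul]

lemma iotaMap_apply (n : ℕ) (a : Fin n → ℝ) (x : ℕ → ℝ) :
    iotaMap n a x = ∑ i : Fin n, a i * x i := by
  simp [iotaMap]

lemma fin_support (f : (ℕ → ℝ) →L[ℝ] ℝ) :
    ∃ N : ℕ, ∀ x : ℕ → ℝ, (∀ i < N, x i = 0) → f x = 0 := by
  have h0 : Filter.Tendsto f (nhds 0) (nhds 0) := by
    simpa using f.continuous.tendsto 0
  have h1 : f ⁻¹' (Ioo (-1 : ℝ) 1) ∈ nhds (0 : ℕ → ℝ) :=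
    h0 (Ioo_mem_nhds (by norm_num) (by norm_num))
  rw [nhds_pi, Filter.mem_pi] at h1
  obtain ⟨I, hI, V, hV, hVsub⟩ := h1
  refine ⟨hI.toFinset.sup id + 1, fun x hx => ?_⟩
  have key : ∀ t : ℝ, t • x ∈ I.pi V := by
    intro t i hi
    have : x i = 0 := hx i (Nat.lt_succ_of_le (Finset.le_sup (f := id) (hI.mem_toFinset.mpr hi)))
    simp only [Pi.smul_apply, this, smul_zero]
    simpa using mem_of_mem_nhds (hV i)
  by_contra hfx
  have h2 : (2 / f x) • x ∈ I.pi V := key _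
  have := hVsub h2
  rw [mem_preimage, map_smul] at this
  rw [smul_eq_mul, div_mul_cancel₀ 2 hfx] at this
  simp [mem_Ioo] at this

/-- Let `φ` be the strong dual of `ℝ^ω = ℕ → ℝ`, i.e. the space `(ℕ → ℝ) →L[ℝ] ℝ` of
continuous linear functionals with the topology of uniform convergence on von Neumann
bounded sets (the default topology on continuous linear maps in Mathlib).  For every
continuous additive group homomorphism `T : φ → 𝕋^ω`, the image `T(φ)` is σ-compact:
it is a countable union of compact subsets of `𝕋^ω`. -/
theorem image_of_strong_dual_in_torus_power_is_sigma_compact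
    (T : ((ℕ → ℝ) →L[ℝ] ℝ) →+ (ℕ → AddCircle (1 : ℝ)))
    (hT : Continuous T) :
    ∃ K : ℕ → Set (ℕ → AddCircle (1 : ℝ)),
      (∀ n, IsCompact (K n)) ∧ Set.range T = ⋃ n, K n := by
  refine ⟨fun n => T '' (iotaMap n '' Metric.closedBall 0 n), fun n => ?_, ?_⟩
  · exact ((isCompact_closedBall _ _).image (iotaMap n).continuous_of_finiteDimensional).image hT
  · apply Set.Subset.antisymm
    · rintro _ ⟨f, rfl⟩
      obtain ⟨N, hN⟩ := fin_support f
      -- bound on coefficients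
      obtain ⟨M, hM⟩ : ∃ M : ℕ, ∀ i < N, |f (Pi.single i 1)| ≤ M := by
        refine ⟨⌈∑ j ∈ Finset.range N, |f (Pi.single j 1)|⌉₊, fun i hi => ?_⟩
        calc |f (Pi.single i 1)| ≤ ∑ j ∈ Finset.range N, |f (Pi.single j 1)| :=
              Finset.single_le_sum (f := fun j => |f (Pi.single j 1)|)
                (fun j _ => abs_nonneg _) (Finset.mem_range.2 hi)
          _ ≤ _ := Nat.le_ceil _
      set n := max N M with hn
      refine mem_iUnion.2 ⟨n, mem_image_of_mem _ ⟨fun i => f (Pi.single (i : ℕ) 1), ?_, ?_⟩⟩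
      · -- in closed ball
        rw [Metric.mem_closedBall, dist_zero_right]
        refine (pi_norm_le_iff_of_nonneg (by positivity)).2 fun i => ?_
        rcases lt_or_ge (i : ℕ) N with hi | hi
        · exact (hM i hi).trans (by exact_mod_cast le_max_right N M)
        · have : f (Pi.single (i : ℕ) 1) = 0 := by
            apply hN
            intro j hj
            exact Pi.single_eq_of_ne (by omega) 1
          simp [this]
      · -- iotaMap n a = f
        ext x
        rw [iotaMap_apply]
        have hsplit : f x = f (fun j => if j < N then x j else 0) := by
          have : f (x - fun j => if j < N then x j else 0) = 0 := by
            apply hN; intro j hj; simp [hj]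
          rw [map_sub, sub_eq_zero] at this
          exact this
        have hrepr : (fun j => if j < N then x j else 0) =
            ∑ i ∈ Finset.range N, x i • (Pi.single i (1:ℝ) : ℕ → ℝ) := by
          ext j
          rw [Finset.sum_apply]
          by_cases hj : j < N
          · rw [Finset.sum_eq_single j]
            · simp [hj]
            · intro b _ hb; simp [Pi.single_eq_of_ne hb.symm]
            · intro hjn; exact absurd (Finset.mem_range.2 hj) hjn
          · simp only [if_neg hj]
            refine (Finset.sum_eq_zero fun b hb => ?_).symm
            have : b ≠ j := by rintro rfl; exact hj (Finset.mem_range.1 hb)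
            simp [Pi.single_eq_of_ne (Ne.symm this)]
        rw [Fin.sum_univ_eq_sum_range (fun i => f (Pi.single i 1) * x i) n, hsplit, hrepr,
          map_sum]
        simp only [map_smul, smul_eq_mul]
        have hzero : ∀ i ∈ Finset.range n, i ∉ Finset.range N → f (Pi.single i 1) * x i = 0 := by
          intro i _ hi
          have : f (Pi.single i (1:ℝ)) = 0 := by
            apply hN
            intro j hj
            exact Pi.single_eq_of_ne (by simp at hi; omega) 1
          simp [this]
        rw [← Finset.sum_subset (Finset.range_subset_range.2 (le_max_left N M)) hzero]
        exact Finset.sum_congr rfl fun i _ => mul_comm _ _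
    · simp only [iUnion_subset_iff]
      intro n
      rintro _ ⟨_, ⟨g, _, rfl⟩, rfl⟩
      exact mem_range_self _
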